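/- Let S be densely defined, closed, symmetric with S ≥ εI, ε > 0. Then the inverse of the reduced Krein–von Neumann extension Ŝ_K (the restriction of S_K to [ker(S_K)]^⊥) satisfies (Ŝ_K)⁻¹ = U_S [|S|⁻¹ S |S|⁻¹] (U_S)*, where S = U_S|S| is the polar decomposition; in particular (Ŝ_K)⁻¹ is unitarily equivalent to the bounded self-adjoint operator |S|⁻¹ S |S|⁻¹ on H. -/

import Mathlib

open scoped ComplexInnerProductSpace
open Filter

noncomputable section

variable {H : Type*} [NormedAddCommGroup H] [InnerProductSpace ℂ H] [CompleteSpace H]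

/-- The kernel of the adjoint `S*` of a densely defined operator `S`,
described as `{v | ∀ u ∈ dom S, ⟪S u, v⟫ = 0}`. -/
def adjKerD (S : H →ₗ.[ℂ] H) : Submodule ℂ H where
  carrier := {v | ∀ u : S.domain, ⟪S u, v⟫ = 0}
  add_mem' := by
    intro a b ha hb u
    rw [inner_add_right, ha u, hb u, add_zero]
  zero_mem' := by
    intro u; exact inner_zero_right _
  smul_mem' := by
    intro c a ha u
    rw [inner_smul_right, ha u, mul_zero]

/-- Theorem 3.4, (3.29): Let `S` be densely defined, closed, symmetric,
`S ≥ ε·I`, `ε > 0`, with polar decomposition `S = U_S |S|`, where `M = |S| = (S*S)^{1/2}`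
(characterized as the self-adjoint operator with `dom M = dom S`, `M ≥ ε·I`, and
`⟪M u, M v⟫ = ⟪S u, S v⟫`), `Minv = |S|⁻¹ ∈ B(H)` its bounded inverse, and
`U = U_S ∈ B(H)` the isometry of the polar decomposition mapping `H` onto
`Ĥ = (ker S*)ᗮ`. Let `S_K` be the Krein–von Neumann extension of `S`. Then the inverse
of the reduced Krein–von Neumann operator `Ŝ_K = S_K|_{(ker S_K)ᗮ}` satisfies
`(Ŝ_K)⁻¹ = U_S (|S|⁻¹ S |S|⁻¹) (U_S)*`; pointwise, with `B y := |S|⁻¹ S |S|⁻¹ y`, this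
says `S_K (U_S (B y)) = U_S y` for all `y ∈ H`; in particular `(Ŝ_K)⁻¹` is unitarily
equivalent to the operator `B = |S|⁻¹ S |S|⁻¹ ∈ B(H)`, which is self-adjoint on `H`. -/
theorem stmt_4 (S S_K M : H →ₗ.[ℂ] H)
    (hdense : Dense (S.domain : Set H))
    (hclosed : S.IsClosed)
    (hsym : ∀ u v : S.domain, ⟪S u, (v : H)⟫ = ⟪(u : H), S v⟫)
    (ε : ℝ) (hε : 0 < ε)
    (hbound : ∀ u : S.domain, ε * ‖(u : H)‖ ^ 2 ≤ (⟪(u : H), S u⟫).re)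
    -- `M = |S|`:
    (hMdom : M.domain = S.domain)
    (hMsym : ∀ u v : M.domain, ⟪M u, (v : H)⟫ = ⟪(u : H), M v⟫)
    (hMbound : ∀ u : M.domain, ε * ‖(u : H)‖ ^ 2 ≤ (⟪(u : H), M u⟫).re)
    (hMsq : ∀ (u v : S.domain) (hu : (u : H) ∈ M.domain) (hv : (v : H) ∈ M.domain),
      ⟪M ⟨(u : H), hu⟩, M ⟨(v : H), hv⟩⟫ = ⟪S u, S v⟫)
    -- `U = U_S`, the unitary of the polar decomposition, mapping `H` onto `Ĥ = (ker S*)ᗮ`: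
    (U : H →L[ℂ] H)
    (hUiso : ∀ x : H, ‖U x‖ = ‖x‖)
    (hUrange : Set.range (⇑U) = ((adjKerD S)ᗮ : Set H))
    (hpolar : ∀ (u : S.domain) (hu : (u : H) ∈ M.domain), S u = U (M ⟨(u : H), hu⟩))
    -- `Minv = |S|⁻¹ ∈ B(H)`:
    (Minv : H →L[ℂ] H)
    (hMinvmem : ∀ x : H, Minv x ∈ S.domain)
    (hMinv1 : ∀ (x : H) (h : Minv x ∈ M.domain), M ⟨Minv x, h⟩ = x)
    (hMinv2 : ∀ u : M.domain, Minv (M u) = (u : H))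
    -- `S_K`, the Krein–von Neumann extension of `S`:
    (hKext : S ≤ S_K)
    (hKadj : ∀ (v : S_K.domain) (u : S.domain), ⟪S u, (v : H)⟫ = ⟪(u : H), S_K v⟫)
    (hdomK : S_K.domain = S.domain ⊔ adjKerD S) :
    -- `(Ŝ_K)⁻¹ = U_S [|S|⁻¹ S |S|⁻¹] (U_S)*`, i.e. `Ŝ_K ∘ U_S ∘ B = U_S` on `H`:
    (∀ y : H, ∃ h2 : U (Minv (S ⟨Minv y, hMinvmem y⟩)) ∈ S_K.domain,
        S_K ⟨U (Minv (S ⟨Minv y, hMinvmem y⟩)), h2⟩ = U y) ∧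
    -- `B = |S|⁻¹ S |S|⁻¹` is self-adjoint on `H`:
    (∀ x y : H, ⟪Minv (S ⟨Minv x, hMinvmem x⟩), y⟫ = ⟪x, Minv (S ⟨Minv y, hMinvmem y⟩)⟫) := by
  classical
  -- Minv is self-adjoint
  have hMinvsa : ∀ z w : H, ⟪Minv z, w⟫ = ⟪z, Minv w⟫ := by
    intro z w
    have hz : Minv z ∈ M.domain := by rw [hMdom]; exact hMinvmem z
    have hw : Minv w ∈ M.domain := by rw [hMdom]; exact hMinvmem w
    calc ⟪Minv z, w⟫ = ⟪((⟨Minv z, hz⟩ : M.domain) : H), M ⟨Minv w, hw⟩⟫ := by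
          rw [hMinv1 w hw]
      _ = ⟪M ⟨Minv z, hz⟩, ((⟨Minv w, hw⟩ : M.domain) : H)⟫ := (hMsym _ _).symm
      _ = ⟪z, Minv w⟫ := by rw [hMinv1 z hz]
  -- S (Minv y) = U y
  have key : ∀ y : H, S ⟨Minv y, hMinvmem y⟩ = U y := by
    intro y
    have hy : Minv y ∈ M.domain := by rw [hMdom]; exact hMinvmem y
    rw [hpolar ⟨Minv y, hMinvmem y⟩ hy, hMinv1 y hy]
  -- U preserves inner products
  have hUinner : ∀ a b : H, ⟪U a, U b⟫ = ⟪a, b⟫ := by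
    intro a b
    exact LinearIsometry.inner_map_map ⟨(U : H →ₗ[ℂ] H), fun x => hUiso x⟩ a b
  -- the correction term lies in ker S*
  have hkmem : ∀ y : H, (U (Minv (S ⟨Minv y, hMinvmem y⟩)) - Minv y) ∈ adjKerD S := by
    intro y
    intro u
    have hu : (u : H) ∈ M.domain := by rw [hMdom]; exact u.2
    rw [inner_sub_right]
    have h1 : ⟪S u, U (Minv (S ⟨Minv y, hMinvmem y⟩))⟫ = ⟪(u : H), U y⟫ := by
      rw [key y, hpolar u hu, hUinner, ← hMinvsa, hMinv2]
    have h2 : ⟪S u, Minv y⟫ = ⟪(u : H), U y⟫ := by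
      rw [← key y]; exact hsym u ⟨Minv y, hMinvmem y⟩
    rw [h1, h2, sub_self]
  constructor
  · intro y
    set w := U (Minv (S ⟨Minv y, hMinvmem y⟩)) with hwdef
    have hk : w - Minv y ∈ adjKerD S := hkmem y
    have hsK : Minv y ∈ S_K.domain := hKext.1 (hMinvmem y)
    have hkK : w - Minv y ∈ S_K.domain := by
      rw [hdomK]; exact Submodule.mem_sup_right hk
    have hw : w ∈ S_K.domain := by
      have : w = Minv y + (w - Minv y) := by abel
      rw [this]; exact S_K.domain.add_mem hsK hkK
    refine ⟨hw, ?_⟩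
    have hsplit : (⟨w, hw⟩ : S_K.domain) = ⟨Minv y, hsK⟩ + ⟨w - Minv y, hkK⟩ := by
      apply Subtype.ext; simp
    have hzero : S_K ⟨w - Minv y, hkK⟩ = 0 := by
      apply (Dense.eq_zero_of_inner_left (𝕜 := ℂ) hdense (x := S_K ⟨w - Minv y, hkK⟩))
      intro u' hu'
      let u : S.domain := ⟨u', hu'⟩
      change ⟪_, (u : H)⟫ = 0
      have := hKadj ⟨w - Minv y, hkK⟩ u
      rw [hk u] at this
      rw [← inner_conj_symm, ← this, map_zero]
    have hSval : S_K ⟨(Minv y : H), hsK⟩ = U y := by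
      rw [← hKext.2 (x := ⟨Minv y, hMinvmem y⟩) (y := ⟨Minv y, hsK⟩) rfl, key y]
    rw [hsplit, S_K.map_add, hSval, hzero, add_zero]
  · intro x y
    calc ⟪Minv (S ⟨Minv x, hMinvmem x⟩), y⟫
        = ⟪S ⟨Minv x, hMinvmem x⟩, Minv y⟫ := hMinvsa _ _
      _ = ⟪(Minv x : H), S ⟨Minv y, hMinvmem y⟩⟫ := hsym _ ⟨Minv y, hMinvmem y⟩
      _ = ⟪x, Minv (S ⟨Minv y, hMinvmem y⟩)⟫ := by rw [← hMinvsa]
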